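/- arXiv:math/0605507 — 4 statements merged into one kernel-verified Lean document; each statement's English description precedes it below -/
import Mathlib

section
/- Let X be an open subset of ℂ, f holomorphic on X, and U a nonempty relatively compact open subset of X with \overline{U} ⊂ X such that the restriction of f to \overline{U} is injective. Then f(U) is open, f restricted to U is a biholomorphism from U onto f(U), and f(∂U) = ∂(f(U)). -/
open Set Filter Topology Complex

/-- If `f` is analytic at `z₀` and injective on a neighborhood of `z₀`, then
`deriv f z₀ ≠ 0`. -/
lemma deriv_ne_zero_of_injOn_nhds {f : ℂ → ℂ} {z₀ : ℂ} (hf : AnalyticAt ℂ f z₀)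
    {V : Set ℂ} (hV : V ∈ 𝓝 z₀) (hinj : Set.InjOn f V) : deriv f z₀ ≠ 0 := by
  intro hd0
  set F : ℂ → ℂ := fun z => f z - f z₀ with hFdef
  have hFz : ∀ z, F z = f z - f z₀ := fun z => rfl
  have hFa : AnalyticAt ℂ F z₀ := hf.sub analyticAt_const
  have hz₀V : z₀ ∈ V := mem_of_mem_nhds hV
  -- F is not eventually zero near z₀
  have hne : ¬ ∀ᶠ z in 𝓝 z₀, F z = 0 := by
    intro h
    have h1 : ∀ᶠ z in 𝓝[≠] z₀, F z = 0 ∧ z ∈ V :=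
      ((h.and hV).filter_mono nhdsWithin_le_nhds)
    obtain ⟨z, ⟨hz0, hzV⟩, hzne⟩ := (h1.and self_mem_nhdsWithin).exists
    have : f z = f z₀ := by rw [hFz, sub_eq_zero] at hz0; exact hz0
    exact hzne (hinj hzV hz₀V this)
  have hord : analyticOrderAt F z₀ ≠ ⊤ := fun h => hne ((analyticOrderAt_eq_top).mp h)
  lift analyticOrderAt F z₀ to ℕ using hord with n hn
  obtain ⟨g, hg, hgne, hgeq⟩ := (hFa.analyticOrderAt_eq_natCast (n := n)).mp hn.symm
  -- n ≥ 2
  have hn0 : n ≠ 0 := by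
    rintro rfl
    have h1 : f z₀ - f z₀ = (z₀ - z₀) ^ 0 • g z₀ := hgeq.self_of_nhds
    simp at h1
    exact hgne h1.symm
  have hn1 : n ≠ 1 := by
    rintro rfl
    have hder : deriv F z₀ = deriv (fun z => (z - z₀) ^ 1 • g z) z₀ :=
      Filter.EventuallyEq.deriv_eq hgeq
    have hD : HasDerivAt (fun z => (z - z₀) ^ 1 • g z) (g z₀) z₀ := by
      have h1 : HasDerivAt (fun z : ℂ => z - z₀) 1 z₀ := (hasDerivAt_id z₀).sub_const z₀
      have h2 : HasDerivAt g (deriv g z₀) z₀ := hg.differentiableAt.hasDerivAt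
      have := h1.mul h2
      simp only [pow_one, smul_eq_mul]
      exact this.congr_deriv (by simp)
    have hF0 : deriv F z₀ = 0 := by
      have h3 : deriv F z₀ = deriv f z₀ := deriv_sub_const _
      rw [h3, hd0]
    rw [hder, hD.deriv] at hF0
    exact hgne hF0
  have hn2 : 2 ≤ n := by omega
  set c := g z₀ with hc
  have hcne : c ≠ 0 := hgne
  -- analytic n-th root of g near z₀
  set h : ℂ → ℂ := fun z => Complex.exp (Complex.log (g z / c) / n + Complex.log c / n)
    with hhdef
  have hh0 : h z₀ ≠ 0 := Complex.exp_ne_zero _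
  have hcontg : ContinuousAt g z₀ := hg.continuousAt
  have hslit : ∀ᶠ z in 𝓝 z₀, g z / c ∈ slitPlane := by
    have h1 : ContinuousAt (fun z => g z / c) z₀ := hcontg.div_const c
    have h2 : slitPlane ∈ 𝓝 (g z₀ / c) := by
      rw [div_self hcne]
      exact isOpen_slitPlane.mem_nhds one_mem_slitPlane
    exact h1.eventually_mem h2
  have hpow : ∀ z : ℂ, g z / c ∈ slitPlane → h z ^ n = g z := by
    intro z hz
    have hnz : (n : ℂ) ≠ 0 := Nat.cast_ne_zero.mpr hn0
    rw [hhdef, ← Complex.exp_nat_mul]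
    rw [mul_add, mul_div_cancel₀ _ hnz, mul_div_cancel₀ _ hnz, Complex.exp_add,
      Complex.exp_log (slitPlane_ne_zero hz), Complex.exp_log hcne,
      div_mul_cancel₀ _ hcne]
  -- h is analytic at z₀
  have hha : AnalyticAt ℂ h z₀ := by
    apply analyticAt_cexp.comp
    apply AnalyticAt.add ?_ analyticAt_const
    apply AnalyticAt.div ?_ analyticAt_const (Nat.cast_ne_zero.mpr hn0)
    apply (analyticAt_clog ?_).comp ((hg.div analyticAt_const hcne).congr ?_)
    · rw [div_self hcne]; exact one_mem_slitPlane
    · rfl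
  set φ : ℂ → ℂ := fun z => (z - z₀) * h z with hφdef
  obtain ⟨p, hp⟩ := hha
  have hsh : HasStrictDerivAt h (p 1 fun _ => 1) z₀ := hp.hasStrictDerivAt
  have hsφ : HasStrictDerivAt φ (h z₀) z₀ := by
    have h1 : HasStrictDerivAt (fun z : ℂ => z - z₀) 1 z₀ :=
      (hasStrictDerivAt_id z₀).sub_const z₀
    have := h1.mul hsh
    exact this.congr_deriv (by simp)
  have hφ0 : φ z₀ = 0 := by simp [hφdef]
  have hmap : map φ (𝓝 z₀) = 𝓝 0 := by
    have := hsφ.map_nhds_eq hh0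
    rwa [hφ0] at this
  -- the good neighborhood
  have hW : {z | F z = (z - z₀) ^ n • g z} ∩ {z | g z / c ∈ slitPlane} ∩ V ∈ 𝓝 z₀ :=
    inter_mem (inter_mem hgeq hslit) hV
  set W := {z | F z = (z - z₀) ^ n • g z} ∩ {z | g z / c ∈ slitPlane} ∩ V with hWdef
  have hφW : φ '' W ∈ 𝓝 (0 : ℂ) := by rw [← hmap]; exact image_mem_map hW
  -- root of unity
  set ζ : ℂ := Complex.exp (2 * Real.pi * Complex.I / n) with hζdef
  have hζn : ζ ^ n = 1 := by
    rw [hζdef, ← Complex.exp_nat_mul, mul_div_cancel₀ _ (Nat.cast_ne_zero.mpr hn0 : (n:ℂ) ≠ 0),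
      Complex.exp_two_pi_mul_I]
  have hζ1 : ζ ≠ 1 := by
    rw [hζdef]
    intro hone
    rw [Complex.exp_eq_one_iff] at hone
    obtain ⟨k, hk⟩ := hone
    have hncC : (n : ℂ) ≠ 0 := Nat.cast_ne_zero.mpr hn0
    rw [div_eq_iff hncC] at hk
    have h2πI : (2 * Real.pi * Complex.I : ℂ) ≠ 0 := by
      simp [Real.pi_ne_zero, Complex.I_ne_zero]
    have h1 : ((k : ℂ) * n) * (2 * Real.pi * Complex.I) = 1 * (2 * Real.pi * Complex.I) := by
      linear_combination -hk
    have hkn : (k : ℂ) * n = 1 := mul_right_cancel₀ h2πI h1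
    have hint : (k * n : ℤ) = 1 := by exact_mod_cast hkn
    have hdvd : (n : ℤ) ∣ 1 := ⟨k, by linarith⟩
    have := Int.le_of_dvd one_pos hdvd
    omega
  -- find w ≠ 0 with w and ζ * w in φ '' W
  have hT : (φ '' W) ∩ ((fun w => ζ * w) ⁻¹' (φ '' W)) ∈ 𝓝 (0 : ℂ) := by
    refine inter_mem hφW ?_
    have hcont : ContinuousAt (fun w : ℂ => ζ * w) 0 := by fun_prop
    exact hcont.preimage_mem_nhds (by simpa using hφW)
  obtain ⟨w, ⟨⟨hw1, hw2⟩, hw0⟩⟩ :=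
    Filter.nonempty_of_mem (inter_mem (mem_nhdsWithin_of_mem_nhds hT)
      (self_mem_nhdsWithin : {(0:ℂ)}ᶜ ∈ 𝓝[≠] (0:ℂ)))
  have hw0' : w ≠ 0 := hw0
  obtain ⟨a, haW, hφa⟩ := hw1
  obtain ⟨b, hbW, hφb⟩ := hw2
  -- f a = f b
  have hfval : ∀ z ∈ W, f z = f z₀ + φ z ^ n := by
    rintro z ⟨⟨hz1, hz2⟩, _⟩
    have h4 : f z - f z₀ = φ z ^ n := by
      have h5 : F z = φ z ^ n := by
        rw [hz1, hφdef]
        simp only [smul_eq_mul, mul_pow]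
        rw [hpow z hz2]
      exact h5
    linear_combination h4
  have hfa : f a = f z₀ + w ^ n := by rw [hfval a haW, hφa]
  have hfb : f b = f z₀ + w ^ n := by
    rw [hfval b hbW, hφb, mul_pow, hζn, one_mul]
  have hab : a = b := hinj haW.2 hbW.2 (hfa.trans hfb.symm)
  rw [hab, hφb] at hφa
  have : ζ = 1 := by
    have := mul_right_cancel₀ hw0' (hφa.trans (one_mul w).symm)
    exact this
  exact hζ1 this

/-- If `f` is holomorphic on an open `X ⊆ ℂ`, `U` is a nonempty relatively
compact open subset with `closure U ⊆ X`, and `f` is injective on `closure U`, then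
`f(U)` is open, `f|_U` is a biholomorphism onto `f(U)`, and `f(∂U) = ∂(f(U))`. -/
theorem stmt_2 (X : Set ℂ) (hX : IsOpen X) (f : ℂ → ℂ) (hf : DifferentiableOn ℂ f X)
    (U : Set ℂ) (hUne : U.Nonempty) (hUo : IsOpen U) (hUc : IsCompact (closure U))
    (hUX : closure U ⊆ X) (hinj : Set.InjOn f (closure U)) :
    IsOpen (f '' U) ∧
    (∃ g : ℂ → ℂ, DifferentiableOn ℂ g (f '' U) ∧
      (∀ x ∈ U, g (f x) = x) ∧ (∀ y ∈ f '' U, f (g y) = y)) ∧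
    f '' frontier U = frontier (f '' U) := by
  have hinjU : Set.InjOn f U := hinj.mono subset_closure
  -- analyticity and nonzero derivative at points of U
  have hana : ∀ z ∈ U, AnalyticAt ℂ f z := fun z hz =>
    hf.analyticAt (hX.mem_nhds (hUX (subset_closure hz)))
  have hder : ∀ z ∈ U, deriv f z ≠ 0 := fun z hz =>
    deriv_ne_zero_of_injOn_nhds (hana z hz) (hUo.mem_nhds hz) hinjU
  have hstrict : ∀ z ∈ U, HasStrictDerivAt f (deriv f z) z := by
    intro z hz
    obtain ⟨p, hp⟩ := hana z hz
    have h1 := hp.hasStrictDerivAt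
    have h2 : p 1 (fun _ => 1) = deriv f z := h1.hasDerivAt.deriv.symm
    rwa [h2] at h1
  -- openness of f '' U
  have hopen : IsOpen (f '' U) := by
    rw [isOpen_iff_mem_nhds]
    rintro y ⟨z, hz, rfl⟩
    rw [← (hstrict z hz).map_nhds_eq (hder z hz)]
    exact image_mem_map (hUo.mem_nhds hz)
  refine ⟨hopen, ?_, ?_⟩
  · -- inverse
    set g : ℂ → ℂ := Function.invFunOn f U with hgdef
    have hleft : ∀ x ∈ U, g (f x) = x := fun x hx => hinjU.leftInvOn_invFunOn hx
    have hright : ∀ y ∈ f '' U, f (g y) = y := by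
      rintro y ⟨x, hx, rfl⟩
      exact Function.invFunOn_eq ⟨x, hx, rfl⟩
    refine ⟨g, ?_, hleft, hright⟩
    rintro y ⟨z, hz, rfl⟩
    have hev : ∀ᶠ x in 𝓝 z, g (f x) = x :=
      (hUo.eventually_mem hz).mono fun x hx => hleft x hx
    exact (HasStrictDerivAt.hasDerivAt ((hstrict z hz).to_local_left_inverse (hder z hz) hev)
      ).differentiableAt.differentiableWithinAt
  · -- frontier
    have hCont : ContinuousOn f (closure U) := hf.continuousOn.mono hUX
    have hclo : closure (f '' U) = f '' closure U := by
      apply Subset.antisymm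
      · exact closure_minimal (image_mono subset_closure)
          (hUc.image_of_continuousOn hCont).isClosed
      · exact hCont.image_closure
    rw [hUo.frontier_eq, hopen.frontier_eq,
      hinj.image_diff_subset subset_closure, hclo]
end

section
/- Let U ⊂ ℂ be an open neighborhood of 0 and φ : U → ℂ a non-constant holomorphic map with φ(0) = 0. Then there exist r, τ ∈ ℝ_{>0} such that the closed ball \overline{B(0,r)} is contained in U and, for every θ ∈ ℝ, the restriction of φ to the closure \overline{S(θ−τ, θ+τ, r)} of the open sector S(θ−τ, θ+τ, r) is injective. -/
open Complex Set MeasureTheory intervalIntegral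
open scoped Real

/-- The open sector `S(α, β, r) = {ρ e^{iθ} : 0 < ρ < r, α < θ < β}` in `ℂ`. -/
def Sector (α β r : ℝ) : Set ℂ :=
  {z : ℂ | ∃ ρ θ : ℝ, 0 < ρ ∧ ρ < r ∧ α < θ ∧ θ < β ∧
    z = (ρ : ℂ) * Complex.exp (θ * Complex.I)}

private lemma contAt_deriv_of_analyticAt {g : ℂ → ℂ} {w : ℂ} (h : AnalyticAt ℂ g w) :
    ContinuousAt (deriv g) w := by
  have h2 : ContinuousAt (fun z => fderiv ℂ g z 1) w :=
    ((ContinuousLinearMap.apply ℂ ℂ (1 : ℂ)).continuous.continuousAt).comp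
      h.fderiv.continuousAt
  simpa only [fderiv_apply_one_eq_deriv] using h2

private lemma exp_mul_I_add (a b : ℝ) :
    Complex.exp ((a : ℂ) * Complex.I) * Complex.exp ((b : ℂ) * Complex.I)
      = Complex.exp (((a + b : ℝ) : ℂ) * Complex.I) := by
  rw [← Complex.exp_add]; congr 1; push_cast; ring

private lemma exp_mul_I_pow (x : ℝ) (m : ℕ) :
    Complex.exp ((x : ℂ) * Complex.I) ^ m
      = Complex.exp ((((m : ℝ) * x : ℝ) : ℂ) * Complex.I) := by
  rw [← Complex.exp_nat_mul]; congr 1; push_cast; ring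

/-- For `φ` holomorphic near `0`, not identically zero near `0`, with
`φ(0) = 0`, there are `r, τ > 0` with `closedBall 0 r ⊆ U` such that for every
direction `θ`, `φ` is injective on the closure of the sector `S(θ-τ, θ+τ, r)`. -/
theorem stmt_4 (U : Set ℂ) (hU : IsOpen U) (h0 : (0 : ℂ) ∈ U)
    (φ : ℂ → ℂ) (hφ : DifferentiableOn ℂ φ U) (hφ0 : φ 0 = 0)
    (hnc : ¬ ∀ᶠ z in nhds (0 : ℂ), φ z = 0) :
    ∃ r τ : ℝ, 0 < r ∧ 0 < τ ∧ Metric.closedBall (0 : ℂ) r ⊆ U ∧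
      ∀ θ : ℝ, Set.InjOn φ (closure (Sector (θ - τ) (θ + τ) r)) := by
  classical
  have hA : AnalyticAt ℂ φ 0 := hφ.analyticAt (hU.mem_nhds h0)
  obtain ⟨n, g, hg, hg0, heq⟩ := hA.exists_eventuallyEq_pow_smul_nonzero_iff.mpr hnc
  obtain ⟨m, rfl⟩ : ∃ m, n = m + 1 := by
    cases n with
    | zero =>
      exfalso
      have h := heq.self_of_nhds
      simp only [sub_zero, pow_zero, one_smul, hφ0] at h
      exact hg0 h.symm
    | succ m => exact ⟨m, rfl⟩
  set c₀ : ℝ := ‖g 0‖ with hc₀def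
  have hc₀pos : 0 < c₀ := by simpa [hc₀def] using hg0
  set ε : ℝ := ((m : ℝ) + 1) * c₀ * (Real.sqrt 2 / 4) with hεdef
  have hsqrt2 : (0:ℝ) < Real.sqrt 2 := by positivity
  have hεpos : 0 < ε := by positivity
  -- the error term
  set E : ℂ → ℂ := fun z => ((m : ℂ) + 1) * (g z - g 0) + z * deriv g z with hEdef
  have hE0 : E 0 = 0 := by simp [hEdef]
  have hEc : ContinuousAt E 0 := by
    apply ContinuousAt.add
    · exact continuousAt_const.mul (hg.continuousAt.sub continuousAt_const)
    · exact continuousAt_id.mul (contAt_deriv_of_analyticAt hg)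
  have hEev : ∀ᶠ z in nhds (0 : ℂ), ‖E z‖ ≤ ε := by
    have h := hEc (Metric.closedBall_mem_nhds (E 0) hεpos)
    filter_upwards [h] with z hz
    simpa [hE0, Complex.dist_eq] using hz
  have hev : ∀ᶠ z in nhds (0 : ℂ), z ∈ U ∧ φ z = z ^ (m + 1) * g z ∧
      AnalyticAt ℂ g z ∧ ‖E z‖ ≤ ε := by
    filter_upwards [hU.mem_nhds h0, heq, hg.eventually_analyticAt, hEev] with z h1 h2 h3 h4
    exact ⟨h1, by simpa [smul_eq_mul] using h2, h3, h4⟩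
  obtain ⟨r₁, hr₁pos, hr₁⟩ := Metric.eventually_nhds_iff_ball.mp hev
  set r : ℝ := r₁ / 2 with hrdef
  have hrpos : 0 < r := by positivity
  have hball : Metric.closedBall (0 : ℂ) r ⊆ Metric.ball (0 : ℂ) r₁ := by
    intro z hz
    simp only [Metric.mem_closedBall] at hz
    simp only [Metric.mem_ball]
    linarith
  set τ : ℝ := Real.pi / (4 * ((m : ℝ) + 1)) with hτdef
  have hm1pos : (0:ℝ) < (m : ℝ) + 1 := by positivity
  have hτpos : 0 < τ := by rw [hτdef]; positivity
  have hτ4 : τ ≤ Real.pi / 4 := by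
    rw [hτdef, div_le_div_iff₀ (by positivity) (by norm_num)]
    nlinarith [Real.pi_pos, (Nat.cast_nonneg m : (0:ℝ) ≤ (m : ℝ))]
  have hmτ : (m : ℝ) * τ ≤ Real.pi / 4 := by
    rw [hτdef, ← mul_div_assoc, div_le_div_iff₀ (by positivity) (by norm_num)]
    nlinarith [Real.pi_pos, (Nat.cast_nonneg m : (0:ℝ) ≤ (m : ℝ))]
  have hcosτpos : 0 < Real.cos τ :=
    Real.cos_pos_of_mem_Ioo ⟨by linarith [Real.pi_pos], by linarith [Real.pi_pos]⟩
  refine ⟨r, τ, hrpos, hτpos, fun z hz => (hr₁ z (hball hz)).1, fun θ => ?_⟩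
  -- the closed convex cone
  set C : Set ℂ := {z : ℂ | ‖z‖ ≤ r ∧
      ‖z‖ * Real.cos τ ≤ (z * Complex.exp (((-θ : ℝ) : ℂ) * Complex.I)).re} with hCdef
  have hCclosed : IsClosed C := by
    apply IsClosed.inter
    · exact isClosed_le continuous_norm continuous_const
    · exact isClosed_le (continuous_norm.mul continuous_const)
        (Complex.continuous_re.comp (continuous_id.mul continuous_const))
  have hSsub : Sector (θ - τ) (θ + τ) r ⊆ C := by
    rintro z ⟨ρ, ψ, hρ0, hρr, hψ1, hψ2, rfl⟩
    have habs : ‖(ρ : ℂ) * Complex.exp ((ψ : ℂ) * Complex.I)‖ = ρ := by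
      rw [norm_mul, Complex.norm_exp_ofReal_mul_I, Complex.norm_real, Real.norm_eq_abs, abs_of_pos hρ0, mul_one]
    have hre : ((ρ : ℂ) * Complex.exp ((ψ : ℂ) * Complex.I) *
        Complex.exp (((-θ : ℝ) : ℂ) * Complex.I)).re = ρ * Real.cos (ψ - θ) := by
      rw [mul_assoc, exp_mul_I_add]
      rw [show ψ + -θ = ψ - θ by ring]
      rw [Complex.re_ofReal_mul, Complex.exp_ofReal_mul_I_re]
    have hcos : Real.cos τ ≤ Real.cos (ψ - θ) := by
      rw [← Real.cos_abs (ψ - θ)]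
      apply Real.cos_le_cos_of_nonneg_of_le_pi (abs_nonneg _)
        (by linarith [Real.pi_pos])
      rw [abs_le]; constructor <;> linarith
    exact ⟨by rw [habs]; linarith, by
      rw [habs, hre]
      exact mul_le_mul_of_nonneg_left hcos hρ0.le⟩
  have hclosSub : closure (Sector (θ - τ) (θ + τ) r) ⊆ C :=
    closure_minimal hSsub hCclosed
  have hCconv : Convex ℝ C := by
    intro z hz w hw a b ha hb hab
    have habs : ‖a • z + b • w‖ ≤ a * ‖z‖ + b * ‖w‖ := by
      refine le_trans (norm_add_le _ _) ?_
      rw [Complex.real_smul, Complex.real_smul, norm_mul, norm_mul, Complex.norm_real,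
        Complex.norm_real, Real.norm_of_nonneg ha, Real.norm_of_nonneg hb]
    constructor
    · calc ‖a • z + b • w‖ ≤ a * ‖z‖ + b * ‖w‖ := habs
        _ ≤ a * r + b * r := add_le_add (mul_le_mul_of_nonneg_left hz.1 ha)
            (mul_le_mul_of_nonneg_left hw.1 hb)
        _ = r := by rw [← add_mul, hab, one_mul]
    · calc ‖a • z + b • w‖ * Real.cos τ
          ≤ (a * ‖z‖ + b * ‖w‖) * Real.cos τ :=
            mul_le_mul_of_nonneg_right habs hcosτpos.le
        _ = a * (‖z‖ * Real.cos τ) + b * (‖w‖ * Real.cos τ) := by ring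
        _ ≤ a * (z * Complex.exp (((-θ : ℝ) : ℂ) * Complex.I)).re +
            b * (w * Complex.exp (((-θ : ℝ) : ℂ) * Complex.I)).re :=
            add_le_add (mul_le_mul_of_nonneg_left hz.2 ha)
              (mul_le_mul_of_nonneg_left hw.2 hb)
        _ = ((a • z + b • w) * Complex.exp (((-θ : ℝ) : ℂ) * Complex.I)).re := by
            simp only [Complex.real_smul, add_mul, Complex.add_re, mul_assoc,
              Complex.re_ofReal_mul]
  -- the rotation factor
  set u : ℂ := Complex.exp (((-((m : ℝ) * θ) : ℝ) : ℂ) * Complex.I) *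
      (starRingEnd ℂ) (g 0) with hudef
  have habsu : ‖u‖ = c₀ := by
    rw [hudef, norm_mul, Complex.norm_exp_ofReal_mul_I, Complex.norm_conj, one_mul]
  -- key derivative bound on the cone
  have key : ∀ z ∈ C, c₀ * ε * ‖z‖ ^ m ≤
      (u * (z ^ m * (((m : ℂ) + 1) * g 0 + E z))).re := by
    intro z hz
    by_cases hz0 : z = 0
    · subst hz0
      by_cases hm : m = 0
      · subst hm
        have hu : u = (starRingEnd ℂ) (g 0) := by
          rw [hudef]
          norm_num
        simp only [pow_zero, one_mul, Nat.cast_zero, zero_add, one_mul, hE0, add_zero,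
          mul_one, hu]
        rw [mul_comm ((starRingEnd ℂ) (g 0)) (g 0), Complex.mul_conj, Complex.normSq_eq_norm_sq,
          Complex.ofReal_re, ← hc₀def]
        have h2 : Real.sqrt 2 ≤ 2 := by
          nlinarith [Real.sq_sqrt (by norm_num : (0:ℝ) ≤ 2), Real.sqrt_nonneg 2]
        rw [hεdef]
        push_cast
        nlinarith [hc₀pos]
      · simp [zero_pow hm]
    · -- z ≠ 0
      set w : ℂ := z * Complex.exp (((-θ : ℝ) : ℂ) * Complex.I) with hwdef
      have hw0 : w ≠ 0 := mul_ne_zero hz0 (Complex.exp_ne_zero _)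
      have habsw : ‖w‖ = ‖z‖ := by
        rw [hwdef, norm_mul, Complex.norm_exp_ofReal_mul_I, mul_one]
      have habszpos : 0 < ‖z‖ := by
        simpa using (norm_pos_iff.mpr hz0)
      set δ : ℝ := Complex.arg w with hδdef
      have hcosδ : Real.cos τ ≤ Real.cos δ := by
        have h1 : Real.cos δ = w.re / ‖z‖ := by
          rw [hδdef, Complex.cos_arg hw0, habsw]
        rw [h1, le_div_iff₀ habszpos]
        calc Real.cos τ * ‖z‖ = ‖z‖ * Real.cos τ := by ring
          _ ≤ w.re := hz.2
      have hδτ : |δ| ≤ τ := by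
        by_contra hcon
        push_neg at hcon
        have h2 : Real.cos |δ| < Real.cos τ :=
          Real.cos_lt_cos_of_nonneg_of_le_pi hτpos.le (Complex.abs_arg_le_pi w) hcon
        rw [Real.cos_abs] at h2
        linarith
      have hz_eq : z = (‖z‖ : ℂ) * Complex.exp (((δ + θ : ℝ) : ℂ) * Complex.I) := by
        have h1 : (‖w‖ : ℂ) * Complex.exp ((δ : ℂ) * Complex.I) = w :=
          Complex.norm_mul_exp_arg_mul_I w
        rw [habsw] at h1
        have h2 : w * Complex.exp ((θ : ℂ) * Complex.I) = z := by
          rw [hwdef, mul_assoc, exp_mul_I_add]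
          simp
        conv_lhs => rw [← h2, ← h1]
        rw [mul_assoc, exp_mul_I_add]
      -- main term
      have hA : u * z ^ m * (((m : ℂ) + 1) * g 0) =
          (((((m : ℝ) + 1) * (c₀ ^ 2 * ‖z‖ ^ m)) : ℝ) : ℂ) *
            Complex.exp ((((m : ℝ) * δ : ℝ) : ℂ) * Complex.I) := by
        have hconj : (starRingEnd ℂ) (g 0) * g 0 = ((c₀ ^ 2 : ℝ) : ℂ) := by
          rw [mul_comm, Complex.mul_conj, Complex.normSq_eq_norm_sq]
        calc u * z ^ m * (((m : ℂ) + 1) * g 0)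
            = ((starRingEnd ℂ) (g 0) * g 0) * (((m : ℂ) + 1) *
              (((‖z‖ : ℂ)) ^ m *
              (Complex.exp (((-((m : ℝ) * θ) : ℝ) : ℂ) * Complex.I) *
               Complex.exp (((δ + θ : ℝ) : ℂ) * Complex.I) ^ m))) := by
              rw [hudef]
              nth_rewrite 1 [hz_eq]
              rw [mul_pow]
              ring
          _ = (((((m : ℝ) + 1) * (c₀ ^ 2 * ‖z‖ ^ m)) : ℝ) : ℂ) *
              Complex.exp ((((m : ℝ) * δ : ℝ) : ℂ) * Complex.I) := by
              rw [hconj, exp_mul_I_pow, exp_mul_I_add,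
                show -((m : ℝ) * θ) + (m : ℝ) * (δ + θ) = (m : ℝ) * δ by ring]
              push_cast
              ring
      have hcosmδ : Real.sqrt 2 / 2 ≤ Real.cos ((m : ℝ) * δ) := by
        rw [← Real.cos_pi_div_four, ← Real.cos_abs ((m : ℝ) * δ)]
        apply Real.cos_le_cos_of_nonneg_of_le_pi (abs_nonneg _) (by linarith [Real.pi_pos])
        rw [abs_mul, Nat.abs_cast]
        calc (m : ℝ) * |δ| ≤ (m : ℝ) * τ :=
              mul_le_mul_of_nonneg_left hδτ (Nat.cast_nonneg m)
          _ ≤ Real.pi / 4 := hmτ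
      have hAre : (((m : ℝ) + 1) * (c₀ ^ 2 * ‖z‖ ^ m)) * (Real.sqrt 2 / 2) ≤
          (u * z ^ m * (((m : ℂ) + 1) * g 0)).re := by
        rw [hA, Complex.re_ofReal_mul, Complex.exp_ofReal_mul_I_re]
        apply mul_le_mul_of_nonneg_left hcosmδ
        positivity
      -- error term
      have hBre : -(c₀ * ‖z‖ ^ m * ε) ≤ (u * z ^ m * E z).re := by
        have h1 : ‖u * z ^ m * E z‖ ≤ c₀ * ‖z‖ ^ m * ε := by
          rw [norm_mul, norm_mul, habsu, norm_pow]
          have hEz : ‖E z‖ ≤ ε := (hr₁ z (hball (by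
            simpa [Metric.mem_closedBall, Complex.dist_eq] using hz.1))).2.2.2
          calc c₀ * ‖z‖ ^ m * ‖E z‖
              ≤ c₀ * ‖z‖ ^ m * ε := by
                apply mul_le_mul_of_nonneg_left hEz
                positivity
            _ = c₀ * ‖z‖ ^ m * ε := rfl
        have h2 := (abs_le.1 (Complex.abs_re_le_norm (u * z ^ m * E z))).1
        linarith
      have hsplit : (u * (z ^ m * (((m : ℂ) + 1) * g 0 + E z))).re =
          (u * z ^ m * (((m : ℂ) + 1) * g 0)).re + (u * z ^ m * E z).re := by
        rw [← Complex.add_re]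
        congr 1
        ring
      rw [hsplit]
      have harith : (((m : ℝ) + 1) * (c₀ ^ 2 * ‖z‖ ^ m)) * (Real.sqrt 2 / 2)
          = 2 * (c₀ * ε * ‖z‖ ^ m) := by
        rw [hεdef]; ring
      linarith [hAre, hBre, harith]
  -- injectivity
  intro x hx' y hy' hxy
  by_contra hne
  have hx : x ∈ C := hclosSub hx'
  have hy : y ∈ C := hclosSub hy'
  set γ : ℝ → ℂ := fun t => x + (t : ℂ) * (y - x) with hγdef
  have hγC : ∀ t ∈ Set.Icc (0:ℝ) 1, γ t ∈ C := by
    intro t ht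
    have h := hCconv hx hy (by linarith [ht.2] : (0:ℝ) ≤ 1 - t) ht.1 (by ring)
    convert h using 1
    simp only [hγdef, Complex.real_smul]
    push_cast
    ring
  have hγball : ∀ t ∈ Set.Icc (0:ℝ) 1, γ t ∈ Metric.ball (0:ℂ) r₁ := by
    intro t ht
    apply hball
    simpa [Metric.mem_closedBall, Complex.dist_eq] using (hγC t ht).1
  set D : ℂ → ℂ := fun w => w ^ m * (((m : ℂ) + 1) * g 0 + E w) with hDdef
  have hD : ∀ w ∈ Metric.ball (0:ℂ) r₁, HasDerivAt (fun v => v ^ (m+1) * g v) (D w) w := by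
    intro w hw
    have hga : AnalyticAt ℂ g w := (hr₁ w hw).2.2.1
    have h1 : HasDerivAt (fun v => v ^ (m+1) * g v)
        ((((m:ℕ)+1 : ℕ) : ℂ) * w ^ ((m+1)-1) * g w + w ^ (m+1) * deriv g w) w :=
      (hasDerivAt_pow (m+1) w).mul hga.differentiableAt.hasDerivAt
    convert h1 using 1
    simp only [hDdef, hEdef, Nat.add_sub_cancel]
    push_cast
    ring
  have hDcont : ∀ w ∈ Metric.ball (0:ℂ) r₁, ContinuousAt D w := by
    intro w hw
    have hga : AnalyticAt ℂ g w := (hr₁ w hw).2.2.1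
    apply ContinuousAt.mul (by fun_prop)
    apply ContinuousAt.add continuousAt_const
    exact (continuousAt_const.mul (hga.continuousAt.sub continuousAt_const)).add
      (continuousAt_id.mul (contAt_deriv_of_analyticAt hga))
  have hγcont : Continuous γ := by fun_prop
  have hIcc : Set.uIcc (0:ℝ) 1 = Set.Icc (0:ℝ) 1 := Set.uIcc_of_le zero_le_one
  have hcont : ContinuousOn (fun t => (y - x) * D (γ t)) (Set.uIcc (0:ℝ) 1) := by
    rw [hIcc]
    intro t ht
    exact (continuousAt_const.mul ((hDcont (γ t) (hγball t ht)).comp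
      hγcont.continuousAt)).continuousWithinAt
  have hint : IntervalIntegrable (fun t => (y - x) * D (γ t)) volume 0 1 :=
    hcont.intervalIntegrable
  have hderiv : ∀ t ∈ Set.uIcc (0:ℝ) 1,
      HasDerivAt (fun s : ℝ => (γ s) ^ (m+1) * g (γ s)) ((y - x) * D (γ t)) t := by
    intro t ht
    rw [hIcc] at ht
    have hΓ : HasDerivAt (fun v : ℂ => x + v * (y - x)) (y - x) ((t : ℝ) : ℂ) := by
      simpa using ((hasDerivAt_id ((t:ℝ) : ℂ)).mul_const (y - x)).const_add x
    have hcomp : HasDerivAt ((fun v => v ^ (m+1) * g v) ∘ (fun v : ℂ => x + v * (y - x)))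
        (D (γ t) * (y - x)) ((t : ℝ) : ℂ) :=
      HasDerivAt.comp _ (hD (γ t) (hγball t ht)) hΓ
    have := hcomp.comp_ofReal
    simpa [hγdef, Function.comp, mul_comm] using this
  have hFTC : ∫ t in (0:ℝ)..1, (y - x) * D (γ t) = 0 := by
    rw [intervalIntegral.integral_eq_sub_of_hasDerivAt hderiv hint]
    have h1 : γ 1 = y := by simp [hγdef]
    have h0' : γ 0 = x := by simp [hγdef]
    have hφx : φ x = x ^ (m+1) * g x :=
      (hr₁ x (hball (by simpa [Metric.mem_closedBall, Complex.dist_eq] using hx.1))).2.1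
    have hφy : φ y = y ^ (m+1) * g y :=
      (hr₁ y (hball (by simpa [Metric.mem_closedBall, Complex.dist_eq] using hy.1))).2.1
    rw [h1, h0', ← hφx, ← hφy, hxy, sub_self]
  rw [intervalIntegral.integral_const_mul] at hFTC
  have hyx : y - x ≠ 0 := sub_ne_zero.mpr (Ne.symm hne)
  have hI0 : ∫ t in (0:ℝ)..1, D (γ t) = 0 := by
    rcases mul_eq_zero.mp hFTC with h | h
    · exact absurd h hyx
    · exact h
  -- real part of the integral
  have hcont2 : ContinuousOn (fun t => u * D (γ t)) (Set.uIcc (0:ℝ) 1) := by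
    rw [hIcc]
    intro t ht
    exact (continuousAt_const.mul ((hDcont (γ t) (hγball t ht)).comp
      hγcont.continuousAt)).continuousWithinAt
  have hint2 : IntervalIntegrable (fun t => u * D (γ t)) volume 0 1 :=
    hcont2.intervalIntegrable
  have hre0 : ∫ t in (0:ℝ)..1, (u * D (γ t)).re = 0 := by
    have h1 : ∫ t in (0:ℝ)..1, u * D (γ t) = 0 := by
      rw [intervalIntegral.integral_const_mul, hI0, mul_zero]
    have h2 : ∫ t in (0:ℝ)..1, (u * D (γ t)).re =
        (∫ t in (0:ℝ)..1, u * D (γ t)).re := by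
      rw [intervalIntegral.integral_of_le zero_le_one,
        intervalIntegral.integral_of_le zero_le_one]
      have h3 := ContinuousLinearMap.integral_comp_comm Complex.reCLM hint2.1
      simpa only [Complex.reCLM_apply] using h3
    rw [h2, h1, Complex.zero_re]
  -- positivity of the real part integral
  have hpos : 0 < ∫ t in (0:ℝ)..1, (u * D (γ t)).re := by
    apply intervalIntegral_pos_of_pos_on
    · exact (Complex.continuous_re.comp_continuousOn hcont2).intervalIntegrable
    · intro t ht
      have htIcc : t ∈ Set.Icc (0:ℝ) 1 := ⟨ht.1.le, ht.2.le⟩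
      have hγt0 : γ t ≠ 0 := by
        intro hγ0
        have ht0 : (t : ℂ) ≠ 0 := by
          exact_mod_cast ne_of_gt ht.1
        have hβ : x + (t : ℂ) * (y - x) = 0 := by
          rw [hγdef] at hγ0; exact hγ0
        by_cases hx0 : x = 0
        · apply hne
          rw [hx0]
          have : (t : ℂ) * y = 0 := by
            have := hγ0
            rw [hγdef] at this
            simp only [hx0, zero_add, sub_zero] at this
            exact this
          rcases mul_eq_zero.mp this with h | h
          · exact absurd h ht0
          · exact h.symm
        · -- x ≠ 0 : y is a negative multiple of x, contradiction with cone
          have hxabs : 0 < ‖x‖ := norm_pos_iff.mpr hx0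
          have h' : (t : ℂ) * y = ((t : ℂ) - 1) * x := by
            linear_combination hβ
          have hxre : ‖x‖ * Real.cos τ ≤
              (x * Complex.exp (((-θ : ℝ) : ℂ) * Complex.I)).re := hx.2
          have hyre : ‖y‖ * Real.cos τ ≤
              (y * Complex.exp (((-θ : ℝ) : ℂ) * Complex.I)).re := hy.2
          have hre_t : t * (y * Complex.exp (((-θ : ℝ) : ℂ) * Complex.I)).re
              = (t - 1) * (x * Complex.exp (((-θ : ℝ) : ℂ) * Complex.I)).re := by
            have h2 : ((t : ℝ) : ℂ) * (y * Complex.exp (((-θ : ℝ) : ℂ) * Complex.I))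
                = (((t - 1 : ℝ)) : ℂ) * (x * Complex.exp (((-θ : ℝ) : ℂ) * Complex.I)) := by
              rw [Complex.ofReal_sub, Complex.ofReal_one]
              linear_combination Complex.exp (((-θ : ℝ) : ℂ) * Complex.I) * h'
            calc t * (y * Complex.exp (((-θ : ℝ) : ℂ) * Complex.I)).re
                = (((t : ℝ) : ℂ) * (y * Complex.exp (((-θ : ℝ) : ℂ) * Complex.I))).re :=
                  (Complex.re_ofReal_mul _ _).symm
              _ = ((((t - 1 : ℝ)) : ℂ) * (x * Complex.exp (((-θ : ℝ) : ℂ) * Complex.I))).re := by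
                  rw [h2]
              _ = (t - 1) * (x * Complex.exp (((-θ : ℝ) : ℂ) * Complex.I)).re :=
                  Complex.re_ofReal_mul _ _
          have h1 : 0 < (x * Complex.exp (((-θ : ℝ) : ℂ) * Complex.I)).re := by
            calc (0:ℝ) < ‖x‖ * Real.cos τ := mul_pos hxabs hcosτpos
              _ ≤ _ := hxre
          have h2 : 0 ≤ ‖y‖ * Real.cos τ := by positivity
          have h4 : 0 ≤ t * (y * Complex.exp (((-θ : ℝ) : ℂ) * Complex.I)).re :=
            mul_nonneg ht.1.le (le_trans h2 hyre)
          have h5 : (t - 1) * (x * Complex.exp (((-θ : ℝ) : ℂ) * Complex.I)).re < 0 :=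
            mul_neg_of_neg_of_pos (by linarith [ht.2]) h1
          linarith
      have hγabs : 0 < ‖γ t‖ := norm_pos_iff.mpr hγt0
      calc (0:ℝ) < c₀ * ε * ‖γ t‖ ^ m := by positivity
        _ ≤ (u * (γ t ^ m * (((m : ℂ) + 1) * g 0 + E (γ t)))).re :=
            key (γ t) (hγC t htIcc)
        _ = (u * D (γ t)).re := by rw [hDdef]
    · exact zero_lt_one
  linarith [hre0, hpos]
end

section
/- Let U ⊂ ℂ be an open neighborhood of 0 and φ : U → ℂ a non-constant holomorphic map with φ(0) = 0. Suppose that for given α, β ∈ ℝ there exist μ, δ, R ∈ ℝ_{>0} such that φ maps the real segment (0,δ) into the open sector S(α+μ, β−μ, R). Then there exist η, r' ∈ ℝ_{>0} such that φ(S(−η, η, r')) ⊂ S(α, β, R). -/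
open Complex Real Set Filter

-- Lemma A: small perturbation of 1 has small argument
lemma argA {w : ℂ} {t : ℝ} (ht0 : 0 < t) (ht1 : t ≤ 1)
    (h : ‖w - 1‖ < Real.sin t) : |Complex.arg w| < t := by
  have hπ : (1:ℝ) < π/2 := by have := Real.pi_gt_three; linarith
  have hst : Real.sin t < t := Real.sin_lt ht0
  have hw1 : ‖w - 1‖ < 1 := by linarith
  have hre : 0 < w.re := by
    have h2 : |w.re - 1| ≤ ‖w - 1‖ := by
      simpa using Complex.abs_re_le_norm (w - 1)
    have := abs_lt.mp (lt_of_le_of_lt h2 hw1); linarith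
  have hwne : w ≠ 0 := by
    intro h0; rw [h0] at hre; simp at hre
  have habs : 0 < ‖w‖ := norm_pos_iff.mpr hwne
  have harg : |Complex.arg w| < π/2 := Complex.abs_arg_lt_pi_div_two_iff.mpr (Or.inl hre)
  have hsin : |Real.sin (Complex.arg w)| ≤ ‖w - 1‖ := by
    rw [Complex.sin_arg, abs_div, abs_of_pos habs, div_le_iff₀ habs]
    have e1 : (‖w-1‖)^2 = (w.re-1)^2 + w.im^2 := by
      rw [Complex.sq_norm, Complex.normSq_apply]; simp; ring
    have e2 : (‖w‖)^2 = w.re^2 + w.im^2 := by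
      rw [Complex.sq_norm, Complex.normSq_apply]; ring
    nlinarith [sq_nonneg (w.re*(w.re-1) + w.im^2), abs_nonneg w.im, _root_.sq_abs w.im,
      norm_nonneg (w-1), mul_nonneg (norm_nonneg (w-1)) habs.le]
  by_contra hcon
  push_neg at hcon
  have hmem1 : t ∈ Icc (-(π/2)) (π/2) := ⟨by linarith, by linarith⟩
  have hmem2 : |Complex.arg w| ∈ Icc (-(π/2)) (π/2) :=
    ⟨le_trans (by linarith) (abs_nonneg _), harg.le⟩
  have hmono : Real.sin t ≤ Real.sin |Complex.arg w| :=
    Real.strictMonoOn_sin.monotoneOn hmem1 hmem2 hcon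
  have hsabs : Real.sin |Complex.arg w| = |Real.sin (Complex.arg w)| := by
    rcases abs_cases (Complex.arg w) with ⟨h1, h2⟩ | ⟨h1, h2⟩
    · rw [h1, _root_.abs_of_nonneg (Real.sin_nonneg_of_nonneg_of_le_pi h2 (by linarith))]
    · rw [h1, Real.sin_neg, abs_of_nonpos
        (Real.sin_nonpos_of_nonpos_of_neg_pi_le h2.le (by linarith))]
  rw [hsabs] at hmono
  linarith [lt_of_le_of_lt hsin h]

/-- If `φ` is holomorphic near `0`, not identically zero near `0`, `φ(0)=0`,
and `φ` maps the real segment `(0, δ)` into the sector `S(α+μ, β-μ, R)`, then `φ` maps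
some small sector `S(-η, η, r')` into `S(α, β, R)`. -/
theorem stmt_5 (U : Set ℂ) (hU : IsOpen U) (h0 : (0 : ℂ) ∈ U)
    (φ : ℂ → ℂ) (hφ : DifferentiableOn ℂ φ U) (hφ0 : φ 0 = 0)
    (hnc : ¬ ∀ᶠ z in nhds (0 : ℂ), φ z = 0)
    (α β : ℝ) (μ δ R : ℝ) (hμ : 0 < μ) (hδ : 0 < δ) (hR : 0 < R)
    (hseg : ∀ x : ℝ, 0 < x → x < δ → φ (x : ℂ) ∈ Sector (α + μ) (β - μ) R) :
    ∃ η r' : ℝ, 0 < η ∧ 0 < r' ∧ Sector (-η) η r' ⊆ U ∧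
      φ '' Sector (-η) η r' ⊆ Sector α β R := by
  have hA : AnalyticAt ℂ φ 0 := hφ.analyticAt (hU.mem_nhds h0)
  -- order is a finite natural number
  have hord : analyticOrderAt φ 0 ≠ ⊤ := by
    intro h; exact hnc (analyticOrderAt_eq_top.mp h)
  obtain ⟨n, hn⟩ : ∃ n : ℕ, analyticOrderAt φ 0 = n := by
    lift analyticOrderAt φ 0 to ℕ using hord with n; exact ⟨n, rfl⟩
  obtain ⟨g, hg, hg0, heq⟩ := (hA.analyticOrderAt_eq_natCast).mp hn
  have heq' : ∀ᶠ z in nhds (0:ℂ), φ z = z ^ n * g z := by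
    filter_upwards [heq] with z hz
    simpa using hz
  have hn1 : 1 ≤ n := by
    rcases Nat.eq_zero_or_pos n with h | h
    · exfalso
      have := heq'.self_of_nhds
      rw [h] at this; simp [hφ0] at this
      exact hg0 this.symm
    · exact h
  set c : ℂ := g 0 with hc
  set t : ℝ := min (μ/2) 1 with ht
  have ht0 : 0 < t := lt_min (by linarith) one_pos
  have ht1 : t ≤ 1 := min_le_right _ _
  have htμ : t ≤ μ/2 := min_le_left _ _
  have hsint : 0 < Real.sin t := Real.sin_pos_of_pos_of_lt_pi ht0
    (by have := Real.pi_gt_three; linarith)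
  have habsc : 0 < ‖c‖ := norm_pos_iff.mpr hg0
  -- eventual good behavior on a ball
  have hev : ∀ᶠ z in nhds (0:ℂ), φ z = z ^ n * g z ∧
      ‖g z - c‖ < ‖c‖ * Real.sin t ∧
      ‖φ z‖ < R ∧ z ∈ U := by
    have e2 : ∀ᶠ z in nhds (0:ℂ), ‖g z - c‖ < ‖c‖ * Real.sin t := by
      have := hg.continuousAt.tendsto
      have hb := Metric.tendsto_nhds.mp this (‖c‖ * Real.sin t) (by positivity)
      filter_upwards [hb] with z hz
      rwa [Complex.dist_eq] at hz
    have e3 : ∀ᶠ z in nhds (0:ℂ), ‖φ z‖ < R := by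
      have := hA.continuousAt.tendsto
      rw [hφ0] at this
      have hb := Metric.tendsto_nhds.mp this R hR
      filter_upwards [hb] with z hz
      rwa [Complex.dist_eq, sub_zero] at hz
    filter_upwards [heq', e2, e3, hU.mem_nhds h0] with z h1 h2 h3 h4
    exact ⟨h1, h2, h3, h4⟩
  obtain ⟨ε, hε, hball⟩ := Metric.eventually_nhds_iff.mp hev
  -- existence of θ* with exp(θ* I) = c / |c|
  obtain ⟨θs, hθsmem, hθs⟩ : ∃ θs ∈ Icc (α + μ) (β - μ),
      Complex.exp (θs * Complex.I) = c / (‖c‖ : ℂ) := by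
    have h1 : Filter.Tendsto (fun x : ℝ => (x:ℂ)) (nhdsWithin 0 (Ioi 0)) (nhds 0) := by
      have := (Complex.continuous_ofReal.tendsto 0).mono_left
        (nhdsWithin_le_nhds : nhdsWithin (0:ℝ) (Ioi 0) ≤ nhds 0)
      simpa using this
    have hgcont : Filter.Tendsto (fun x : ℝ => g (x:ℂ)) (nhdsWithin 0 (Ioi 0)) (nhds c) :=
      hg.continuousAt.tendsto.comp h1
    have habstend : Filter.Tendsto (fun x : ℝ => ((‖g (x:ℂ)‖ : ℝ) : ℂ))
        (nhdsWithin 0 (Ioi 0)) (nhds ((‖c‖ : ℝ) : ℂ)) :=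
      (Complex.continuous_ofReal.tendsto _).comp ((continuous_norm.tendsto _).comp hgcont)
    have hF : Filter.Tendsto (fun x : ℝ => g (x:ℂ) / (‖g (x:ℂ)‖ : ℂ))
        (nhdsWithin 0 (Ioi 0)) (nhds (c / (‖c‖ : ℂ))) :=
      hgcont.div habstend (Complex.ofReal_ne_zero.mpr (ne_of_gt habsc))
    set S : Set ℂ := (fun θ : ℝ => Complex.exp (θ * Complex.I)) '' Icc (α+μ) (β-μ) with hS
    have hScl : IsClosed S := (isCompact_Icc.image (by continuity)).isClosed
    have hevS : ∀ᶠ x : ℝ in nhdsWithin (0:ℝ) (Ioi 0),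
        g (x:ℂ) / (‖g (x:ℂ)‖ : ℂ) ∈ S := by
      filter_upwards [Ioo_mem_nhdsGT_of_mem
        (Set.mem_Ico.mpr ⟨le_refl 0, lt_min hδ hε⟩)] with x hx
      obtain ⟨hx0, hxlt⟩ := hx
      have hxδ : x < δ := lt_of_lt_of_le hxlt (min_le_left _ _)
      have hxε : x < ε := lt_of_lt_of_le hxlt (min_le_right _ _)
      have hdist : dist ((x:ℝ):ℂ) 0 < ε := by
        rw [Complex.dist_eq, sub_zero, Complex.norm_real, Real.norm_eq_abs, abs_of_pos hx0]; exact hxε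
      obtain ⟨hfac, hgd, _, _⟩ := hball hdist
      obtain ⟨ρ, θx, hρ0, hρR, hθ1, hθ2, hrep⟩ := hseg x hx0 hxδ
      have hxn : (0:ℝ) < x ^ n := pow_pos hx0 n
      have hxnne : ((x:ℂ))^n ≠ 0 := pow_ne_zero _ (by exact_mod_cast ne_of_gt hx0)
      have key : ((x:ℂ))^n * g (x:ℂ) = (ρ:ℂ) * Complex.exp (θx * Complex.I) := by
        rw [← hfac, hrep]
      have hgx : g (x:ℂ) = ((ρ / x^n : ℝ) : ℂ) * Complex.exp (θx * Complex.I) := by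
        push_cast
        rw [div_mul_eq_mul_div, eq_div_iff hxnne]
        linear_combination key
      have habsg : ‖g (x:ℂ)‖ = ρ / x^n := by
        rw [hgx, norm_mul, Complex.norm_real, Real.norm_eq_abs, Complex.norm_exp_ofReal_mul_I, mul_one,
          abs_of_pos (div_pos hρ0 hxn)]
      refine ⟨θx, Set.mem_Icc.mpr ⟨hθ1.le, hθ2.le⟩, ?_⟩
      show Complex.exp (θx * Complex.I) = _
      rw [habsg, hgx]
      have hne : ((ρ / x^n : ℝ) : ℂ) ≠ 0 :=
        Complex.ofReal_ne_zero.mpr (ne_of_gt (div_pos hρ0 hxn))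
      rw [mul_comm (((ρ / x^n : ℝ) : ℂ)), mul_div_assoc, div_self hne, mul_one]
    obtain ⟨θs, hθsmem, hθs⟩ := hScl.mem_of_tendsto hF hevS
    exact ⟨θs, hθsmem, hθs⟩
  obtain ⟨hθsl, hθsr⟩ := hθsmem
  have hnR : (0:ℝ) < n := by exact_mod_cast hn1
  set η : ℝ := μ / (4 * n) with hη
  have hη0 : 0 < η := div_pos hμ (by positivity)
  refine ⟨η, ε, hη0, hε, ?_, ?_⟩
  · rintro z ⟨ρ, θ, hρ0, hρε, _, _, rfl⟩
    have hdist : dist ((ρ:ℂ) * Complex.exp ((θ:ℝ) * Complex.I)) 0 < ε := by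
      rw [Complex.dist_eq, sub_zero, norm_mul, Complex.norm_real, Real.norm_eq_abs,
        Complex.norm_exp_ofReal_mul_I, mul_one, abs_of_pos hρ0]
      exact hρε
    exact (hball hdist).2.2.2
  · rintro v ⟨z, ⟨ρ, θ, hρ0, hρε, hθl, hθr, rfl⟩, rfl⟩
    set Z : ℂ := ((ρ:ℝ):ℂ) * Complex.exp ((θ:ℝ) * Complex.I) with hZ
    have hdist : dist Z 0 < ε := by
      rw [hZ, Complex.dist_eq, sub_zero, norm_mul, Complex.norm_real, Real.norm_eq_abs,
        Complex.norm_exp_ofReal_mul_I, mul_one, abs_of_pos hρ0]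
      exact hρε
    obtain ⟨hfac, hgd, hφR, _⟩ := hball hdist
    set w : ℂ := g Z / c with hwdef
    have hw1 : ‖w - 1‖ < Real.sin t := by
      have hsub : w - 1 = (g Z - c) / c := by
        rw [hwdef]; field_simp
      rw [hsub, norm_div, div_lt_iff₀ habsc]
      linarith [hgd]
    have hargw : |Complex.arg w| < t := argA ht0 ht1 hw1
    have hwne : w ≠ 0 := by
      intro h0
      rw [h0] at hw1
      simp only [zero_sub, norm_neg, norm_one] at hw1
      linarith [Real.sin_le_one t, Real.sin_lt ht0]
    have haw : 0 < ‖w‖ := norm_pos_iff.mpr hwne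
    set ψ : ℝ := Complex.arg w with hψ
    have hgZ : g Z = c * w := by
      rw [hwdef, mul_div_cancel₀ _ hg0]
    have hcrep : ((‖c‖ : ℝ) : ℂ) * Complex.exp ((θs:ℝ) * Complex.I) = c := by
      rw [hθs, mul_div_cancel₀ _ (Complex.ofReal_ne_zero.mpr (ne_of_gt habsc))]
    have hwrep : ((‖w‖ : ℝ) : ℂ) * Complex.exp ((ψ:ℝ) * Complex.I) = w :=
      Complex.norm_mul_exp_arg_mul_I w
    have eexp : Complex.exp (((n*θ+θs+ψ : ℝ)) * Complex.I) =
        Complex.exp ((θ:ℂ)*Complex.I)^n * Complex.exp ((θs:ℂ)*Complex.I) *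
          Complex.exp ((ψ:ℂ)*Complex.I) := by
      rw [← Complex.exp_nat_mul, ← Complex.exp_add, ← Complex.exp_add]
      congr 1
      push_cast
      ring
    have hP0 : 0 < ρ^n * ‖c‖ * ‖w‖ := by positivity
    have key : φ Z = ((ρ^n * ‖c‖ * ‖w‖ : ℝ) : ℂ) *
        Complex.exp (((n*θ+θs+ψ : ℝ)) * Complex.I) := by
      calc φ Z = Z^n * g Z := hfac
        _ = (((ρ:ℝ):ℂ) * Complex.exp ((θ:ℂ)*Complex.I))^n *
            ((((‖c‖ : ℝ):ℂ) * Complex.exp ((θs:ℂ)*Complex.I)) *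
             (((‖w‖ : ℝ):ℂ) * Complex.exp ((ψ:ℂ)*Complex.I))) := by
            rw [hgZ, hcrep, hwrep]
        _ = ((ρ^n * ‖c‖ * ‖w‖ : ℝ) : ℂ) *
            (Complex.exp ((θ:ℂ)*Complex.I)^n * Complex.exp ((θs:ℂ)*Complex.I) *
             Complex.exp ((ψ:ℂ)*Complex.I)) := by push_cast; ring
        _ = _ := by rw [← eexp]
    have habsφ : ‖φ Z‖ = ρ^n * ‖c‖ * ‖w‖ := by
      rw [key, norm_mul, Complex.norm_real, Real.norm_eq_abs, Complex.norm_exp_ofReal_mul_I, mul_one,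
        abs_of_pos hP0]
    have hnθ : |(n:ℝ)*θ| < μ/4 := by
      rw [abs_mul, Nat.abs_cast]
      have hθabs : |θ| < η := abs_lt.mpr ⟨hθl, hθr⟩
      calc (n:ℝ)*|θ| < n*η := by exact mul_lt_mul_of_pos_left hθabs hnR
        _ = μ/4 := by rw [hη]; field_simp
    obtain ⟨hnθ1, hnθ2⟩ := abs_lt.mp hnθ
    obtain ⟨hψ1, hψ2⟩ := abs_lt.mp hargw
    refine ⟨ρ^n * ‖c‖ * ‖w‖, n*θ+θs+ψ, hP0, ?_, by linarith, by linarith, key⟩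
    rw [← habsφ]
    exact hφR
end

section
/- Let X ⊂ ℂ be open, P = Σ_{j=0}^m a_j(z) (d/dz)^j with a_j holomorphic on X and a_m not identically zero, and let U be an open ball with \overline{U} ⊂ X such that a_m(z) ≠ 0 for every z ∈ ∂U. If u is holomorphic on U and Pu has polynomial growth on U, then u has polynomial growth on U. -/
open Metric Set

lemma infDist_sphere_eq (c z : ℂ) (ρ : ℝ) (hρ : 0 < ρ) (hz : dist z c ≤ ρ) :
    Metric.infDist z (Metric.sphere c ρ) = ρ - dist z c := by
  have hsne : (Metric.sphere c ρ).Nonempty := by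
    refine ⟨c + ρ, ?_⟩
    simp [Metric.mem_sphere, dist_eq_norm, abs_of_pos hρ]
  apply le_antisymm
  · by_cases h : z = c
    · have hmem : c + ρ ∈ Metric.sphere c ρ := by
        simp [Metric.mem_sphere, dist_eq_norm, abs_of_pos hρ]
      have := Metric.infDist_le_dist_of_mem (x := z) hmem
      rw [h] at this ⊢
      simpa [dist_eq_norm, abs_of_pos hρ] using this
    · set d := dist z c with hd
      have hd0 : 0 < d := dist_pos.2 h
      set w : ℂ := c + ((ρ / d : ℝ) : ℂ) * (z - c) with hw
      have hzc : ‖z - c‖ = d := by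
        rw [hd, dist_eq_norm]
      have hmem : w ∈ Metric.sphere c ρ := by
        simp only [Metric.mem_sphere, dist_eq_norm, hw]
        have : c + ((ρ / d : ℝ) : ℂ) * (z - c) - c = ((ρ / d : ℝ) : ℂ) * (z - c) := by ring
        rw [this, norm_mul, Complex.norm_real]
        rw [Real.norm_eq_abs, abs_of_pos (div_pos hρ hd0)]
        show ρ / d * ‖z - c‖ = ρ
        rw [hzc]; field_simp
      refine le_trans (Metric.infDist_le_dist_of_mem hmem) ?_
      have hzw : z - w = ((1 - ρ / d : ℝ) : ℂ) * (z - c) := by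
        push_cast [hw]; ring
      rw [dist_eq_norm, hzw, norm_mul, Complex.norm_real, Real.norm_eq_abs]
      have h1 : |1 - ρ / d| = ρ / d - 1 := by
        rw [abs_of_nonpos]
        · ring
        · have : (1 : ℝ) ≤ ρ / d := (one_le_div hd0).2 hz
          linarith
      rw [h1]
      show (ρ / d - 1) * ‖z - c‖ ≤ ρ - d
      rw [hzc]; field_simp; exact le_rfl
  · by_contra hlt
    push_neg at hlt
    obtain ⟨y, hy, hdy⟩ := (Metric.infDist_lt_iff hsne).1 hlt
    have := dist_triangle y z c
    rw [Metric.mem_sphere] at hy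
    rw [dist_comm y z] at this
    linarith


lemma itd_analytic (c : ℂ) (ρ : ℝ) (u : ℂ → ℂ) (hu : DifferentiableOn ℂ u (Metric.ball c ρ)) :
    ∀ j, AnalyticOnNhd ℂ (iteratedDeriv j u) (Metric.ball c ρ) := by
  intro j
  induction j with
  | zero => simpa [iteratedDeriv_zero] using hu.analyticOnNhd Metric.isOpen_ball
  | succ n ih => rw [iteratedDeriv_succ]; exact ih.deriv

lemma itd_hasDerivAt (c : ℂ) (ρ : ℝ) (u : ℂ → ℂ) (hu : DifferentiableOn ℂ u (Metric.ball c ρ))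
    (j : ℕ) {w : ℂ} (hw : w ∈ Metric.ball c ρ) :
    HasDerivAt (iteratedDeriv j u) (iteratedDeriv (j + 1) u w) w := by
  rw [iteratedDeriv_succ]
  exact ((itd_analytic c ρ u hu j w hw).differentiableAt).hasDerivAt

lemma radial_hasDerivAt (c : ℂ) (ρ : ℝ) (u : ℂ → ℂ)
    (hu : DifferentiableOn ℂ u (Metric.ball c ρ)) (e : ℂ) (j : ℕ) (t : ℝ)
    (hmem : c + (t : ℂ) * e ∈ Metric.ball c ρ) :
    HasDerivAt (fun s : ℝ => iteratedDeriv j u (c + (s : ℂ) * e))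
      (e * iteratedDeriv (j + 1) u (c + (t : ℂ) * e)) t := by
  have hinner : HasDerivAt (fun w : ℂ => c + w * e) e (t : ℂ) := by
    simpa using ((hasDerivAt_id (t : ℂ)).mul_const e).const_add c
  have houter := itd_hasDerivAt c ρ u hu j hmem
  have hcomp := HasDerivAt.comp (t : ℂ) houter hinner
  have := hcomp.comp_ofReal
  simpa [Function.comp, mul_comm] using this


/-- The differential operator `P = ∑_{j=0}^m a_j(z) (d/dz)^j` applied to `u`. -/
noncomputable def Pop (m : ℕ) (a : ℕ → ℂ → ℂ) (u : ℂ → ℂ) : ℂ → ℂ :=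
  fun z => ∑ j ∈ Finset.range (m + 1), a j z * iteratedDeriv j u z

/-- A function `h : ℂ → ℂ` has polynomial growth on a relatively compact open set `U`. -/
def PolyGrowthOn (U : Set ℂ) (h : ℂ → ℂ) : Prop :=
  ∃ C M : ℝ, 0 < C ∧ 0 < M ∧
    ∀ z ∈ U, ‖h z‖ ≤ C * Metric.infDist z (frontier U) ^ (-M)

set_option maxHeartbeats 1000000 in
/-- if `U` is an open ball with `closure U ⊆ X`, the leading coefficient
`a_m` does not vanish on `∂U`, `u` is holomorphic on `U`, and `P u` has polynomial
growth on `U`, then `u` has polynomial growth on `U`. -/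
theorem stmt_13 (X : Set ℂ) (hX : IsOpen X) (m : ℕ) (a : ℕ → ℂ → ℂ)
    (ha : ∀ j ≤ m, DifferentiableOn ℂ (a j) X) (ham : ∃ z ∈ X, a m z ≠ 0)
    (c : ℂ) (ρ : ℝ) (hρ : 0 < ρ) (hUX : closure (Metric.ball c ρ) ⊆ X)
    (hfront : ∀ z ∈ frontier (Metric.ball c ρ), a m z ≠ 0)
    (u : ℂ → ℂ) (hu : DifferentiableOn ℂ u (Metric.ball c ρ))
    (hPu : PolyGrowthOn (Metric.ball c ρ) (Pop m a u)) :
    PolyGrowthOn (Metric.ball c ρ) u := by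
  have hfr : frontier (Metric.ball c ρ) = Metric.sphere c ρ := frontier_ball c hρ.ne'
  have hclos : closure (Metric.ball c ρ) = Metric.closedBall c ρ := closure_ball c hρ.ne'
  rw [hclos] at hUX
  have hinf : ∀ z ∈ Metric.closedBall c ρ,
      Metric.infDist z (frontier (Metric.ball c ρ)) = ρ - dist z c := by
    intro z hz
    rw [hfr]
    exact infDist_sphere_eq c z ρ hρ (Metric.mem_closedBall.1 hz)
  -- a thickening of the sphere where `a m` does not vanish
  obtain ⟨δth, hδth, hthick⟩ : ∃ δ > 0, ∀ w, ρ - δ < dist w c → dist w c ≤ ρ → a m w ≠ 0 := by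
    have hV : IsOpen (X ∩ (a m) ⁻¹' ({0}ᶜ)) :=
      ((ha m le_rfl).continuousOn).isOpen_inter_preimage hX isOpen_compl_singleton
    have hsub : Metric.sphere c ρ ⊆ X ∩ (a m) ⁻¹' ({0}ᶜ) := by
      intro w hw
      refine ⟨hUX (Metric.sphere_subset_closedBall hw), ?_⟩
      simp only [mem_preimage, mem_compl_iff, mem_singleton_iff]
      exact hfront w (by rw [hfr]; exact hw)
    obtain ⟨δ, hδ0, hδ⟩ := (isCompact_sphere c ρ).exists_thickening_subset_open hV hsub
    have hsne : (Metric.sphere c ρ).Nonempty := NormedSpace.sphere_nonempty.2 hρ.le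
    refine ⟨δ, hδ0, fun w h1 h2 => ?_⟩
    have hw : w ∈ Metric.thickening δ (Metric.sphere c ρ) := by
      rw [Metric.mem_thickening_iff_infDist_lt hsne, infDist_sphere_eq c w ρ hρ h2]
      linarith
    have := (hδ hw).2
    simpa using this
  obtain ⟨ε, hε⟩ : ∃ ε : ℝ, ε = min (δth / 2) (ρ / 2) := ⟨_, rfl⟩
  have hε0 : 0 < ε := by rw [hε]; exact lt_min (by linarith) (by linarith)
  have hερ2 : ε ≤ ρ / 2 := by rw [hε]; exact min_le_right _ _
  have hεδ : ε ≤ δth / 2 := by rw [hε]; exact min_le_left _ _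
  obtain ⟨r0, hr0⟩ : ∃ r0 : ℝ, r0 = ρ - ε := ⟨_, rfl⟩
  have hr00 : 0 < r0 := by rw [hr0]; linarith
  have hr0ρ : r0 < ρ := by rw [hr0]; linarith
  have hann : ∀ w : ℂ, r0 ≤ dist w c → dist w c ≤ ρ → a m w ≠ 0 := by
    intro w h1 h2
    refine hthick w ?_ h2
    rw [hr0] at h1; linarith
  -- lower bound for `a m` on the closed annulus
  obtain ⟨δ0, hδ00, hδ0⟩ : ∃ δ0 > 0, ∀ w : ℂ, r0 ≤ dist w c → dist w c ≤ ρ →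
      δ0 ≤ ‖a m w‖ := by
    set A : Set ℂ := Metric.closedBall c ρ \ Metric.ball c r0 with hA
    have hmemA : ∀ w : ℂ, w ∈ A ↔ (r0 ≤ dist w c ∧ dist w c ≤ ρ) := by
      intro w
      simp only [hA, mem_diff, Metric.mem_closedBall, Metric.mem_ball, not_lt]
      tauto
    have hAc : IsCompact A := (isCompact_closedBall c ρ).diff Metric.isOpen_ball
    have hAne : A.Nonempty := by
      refine ⟨c + (ρ : ℂ), (hmemA _).2 ⟨?_, ?_⟩⟩ <;>
        · simp [dist_eq_norm, abs_of_pos hρ]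
          try linarith
    have hAX : A ⊆ X := fun w hw => hUX hw.1
    have hcont : ContinuousOn (fun w => ‖a m w‖) A :=
      continuous_norm.comp_continuousOn (((ha m le_rfl).continuousOn).mono hAX)
    obtain ⟨x0, hx0A, hx0min⟩ := hAc.exists_isMinOn hAne hcont
    have hx0 := (hmemA x0).1 hx0A
    refine ⟨‖a m x0‖, ?_, fun w h1 h2 => hx0min ((hmemA w).2 ⟨h1, h2⟩)⟩
    have := hann x0 hx0.1 hx0.2
    simpa [norm_pos_iff] using this
  -- upper bound for the lower-order coefficients
  obtain ⟨BS, hBS0, hBS⟩ : ∃ BS ≥ 0, ∀ w ∈ Metric.closedBall c ρ,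
      (∑ j ∈ Finset.range m, ‖a j w‖) ≤ BS := by
    have hcont : ContinuousOn (fun w => ∑ j ∈ Finset.range m, ‖a j w‖)
        (Metric.closedBall c ρ) := by
      refine continuousOn_finset_sum _ fun j hj => ?_
      have hjm : j ≤ m := le_of_lt (Finset.mem_range.1 hj)
      exact continuous_norm.comp_continuousOn (((ha j hjm).continuousOn).mono hUX)
    obtain ⟨B1, hB1⟩ := (isCompact_closedBall c ρ).exists_bound_of_continuousOn hcont
    refine ⟨max B1 0, le_max_right _ _, fun w hw => ?_⟩
    calc (∑ j ∈ Finset.range m, ‖a j w‖)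
        ≤ ‖∑ j ∈ Finset.range m, ‖a j w‖‖ := le_abs_self _
      _ ≤ B1 := hB1 w hw
      _ ≤ max B1 0 := le_max_left _ _
  -- bound for the derivatives of `u` on the inner closed ball
  obtain ⟨V0, hV01, hV0⟩ : ∃ V0 ≥ 1, ∀ w ∈ Metric.closedBall c r0,
      ‖(fun i : Fin (m + 1) => iteratedDeriv (i : ℕ) u w)‖ ≤ V0 := by
    have hcont : ContinuousOn (fun w => (fun i : Fin (m + 1) => iteratedDeriv (i : ℕ) u w))
        (Metric.closedBall c r0) := by
      refine (continuousOn_pi.2 fun i => ?_).mono (Metric.closedBall_subset_ball hr0ρ)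
      exact (itd_analytic c ρ u hu (i : ℕ)).continuousOn
    obtain ⟨V1, hV1⟩ := (isCompact_closedBall c r0).exists_bound_of_continuousOn hcont
    refine ⟨max V1 1, le_max_right _ _, fun w hw => ?_⟩
    exact le_trans (hV1 w hw) (le_max_left _ _)
  obtain ⟨C, M, hC, hM, hPb⟩ := hPu
  have hPb' : ∀ z ∈ Metric.ball c ρ, ‖Pop m a u z‖ ≤ C * (ρ - dist z c) ^ (-M) := by
    intro z hz
    have := hPb z hz
    rwa [hinf z (Metric.ball_subset_closedBall hz)] at this
  obtain ⟨K, hK⟩ : ∃ K : ℝ, K = 1 + BS / δ0 := ⟨_, rfl⟩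
  have hK1 : 1 ≤ K := by
    have : 0 ≤ BS / δ0 := div_nonneg hBS0 hδ00.le
    simp only [hK]; linarith
  obtain ⟨M', hM'⟩ : ∃ M' : ℝ, M' = M + 1 + 4 * K * ρ := ⟨_, rfl⟩
  have hM'M : M + 1 ≤ M' := by
    have : 0 < 4 * K * ρ := by positivity
    rw [hM']; linarith
  have hM'K : 4 * K * ρ ≤ M' := by rw [hM']; linarith
  have hM'0 : 0 < M' := by linarith
  obtain ⟨D, hD⟩ : ∃ D : ℝ, D = max (max (V0 * ε ^ M') (C / δ0 * ρ ^ (M' - M)))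
      (4 * C * ρ ^ (M' + 1 - M) / (δ0 * M')) := ⟨_, rfl⟩
  have hD0 : 0 < D := by
    have h1 : 0 < V0 * ε ^ M' := by
      have := Real.rpow_pos_of_pos hε0 M'
      nlinarith
    rw [hD]
    calc (0:ℝ) < V0 * ε ^ M' := h1
      _ ≤ _ := le_max_of_le_left (le_max_left _ _)
  -- the key estimate on the annulus
  have key : ∀ z ∈ Metric.ball c ρ, r0 ≤ dist z c →
      ‖u z‖ ≤ D * (ρ - dist z c) ^ (-M') := by
    intro z hz hrz
    set r1 : ℝ := dist z c with hr1d
    have hr1ρ : r1 < ρ := Metric.mem_ball.1 hz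
    have hy0 : 0 < ρ - r1 := by linarith
    have hyρ : ρ - r1 ≤ ρ := by
      have : (0:ℝ) ≤ r1 := dist_nonneg
      linarith
    rcases Nat.eq_zero_or_pos m with hm0 | hm0
    · -- the case `m = 0`
      subst hm0
      have hid : Pop 0 a u z = a 0 z * u z := by
        simp [Pop, Finset.sum_range_one, iteratedDeriv_zero]
      have hz0 : δ0 ≤ ‖a 0 z‖ := hδ0 z hrz hr1ρ.le
      have h1 : δ0 * ‖u z‖ ≤ C * (ρ - r1) ^ (-M) := by
        calc δ0 * ‖u z‖ ≤ ‖a 0 z‖ * ‖u z‖ := by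
              apply mul_le_mul_of_nonneg_right hz0 (norm_nonneg _)
          _ = ‖Pop 0 a u z‖ := by rw [hid, norm_mul]
          _ ≤ C * (ρ - r1) ^ (-M) := hPb' z hz
      have h2 : ‖u z‖ ≤ C / δ0 * (ρ - r1) ^ (-M) := by
        rw [div_mul_eq_mul_div, le_div_iff₀ hδ00, mul_comm]
        exact h1
      have h3 : (ρ - r1) ^ (-M) = (ρ - r1) ^ (M' - M) * (ρ - r1) ^ (-M') := by
        rw [← Real.rpow_add hy0]; ring_nf
      have h4 : (ρ - r1) ^ (M' - M) ≤ ρ ^ (M' - M) :=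
        Real.rpow_le_rpow hy0.le hyρ (by linarith)
      have hDge : C / δ0 * ρ ^ (M' - M) ≤ D := by
        rw [hD]; exact le_trans (le_max_right _ _) (le_max_left _ _)
      calc ‖u z‖ ≤ C / δ0 * (ρ - r1) ^ (-M) := h2
        _ = C / δ0 * (ρ - r1) ^ (M' - M) * (ρ - r1) ^ (-M') := by rw [h3]; ring
        _ ≤ C / δ0 * ρ ^ (M' - M) * (ρ - r1) ^ (-M') := by
            apply mul_le_mul_of_nonneg_right _ (Real.rpow_pos_of_pos hy0 _).le
            apply mul_le_mul_of_nonneg_left h4 (by positivity)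
        _ ≤ D * (ρ - r1) ^ (-M') := by
            apply mul_le_mul_of_nonneg_right hDge (Real.rpow_pos_of_pos hy0 _).le
    · -- the case `1 ≤ m`
      have hr10 : 0 < r1 := lt_of_lt_of_le hr00 hrz
      set e : ℂ := (z - c) / ((r1 : ℝ) : ℂ) with he_def
      have habs_zc : ‖z - c‖ = r1 := by rw [hr1d, Complex.dist_eq]
      have he : ‖e‖ = 1 := by
        rw [he_def, norm_div, habs_zc, Complex.norm_real, Real.norm_eq_abs, abs_of_pos hr10, div_self hr10.ne']
      have hγz : c + ((r1 : ℝ) : ℂ) * e = z := by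
        rw [he_def]
        have : ((r1 : ℝ) : ℂ) ≠ 0 := Complex.ofReal_ne_zero.2 hr10.ne'
        have h2 : ((r1 : ℝ) : ℂ) * ((z - c) / ((r1 : ℝ) : ℂ)) = z - c := by field_simp
        rw [h2]; ring
      set γ : ℝ → ℂ := fun t => c + ((t : ℝ) : ℂ) * e with hγdef
      have hγd : ∀ t : ℝ, 0 ≤ t → dist (γ t) c = t := by
        intro t ht
        simp only [hγdef, dist_eq_norm, add_sub_cancel_left]
        calc ‖((t : ℝ) : ℂ) * e‖ = ‖((t : ℝ) : ℂ)‖ * ‖e‖ := by rw [norm_mul]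
          _ = t := by rw [he, Complex.norm_real, Real.norm_eq_abs, abs_of_nonneg ht, mul_one]
      have hγball : ∀ t : ℝ, 0 ≤ t → t < ρ → γ t ∈ Metric.ball c ρ := fun t ht h2 =>
        Metric.mem_ball.2 (by rw [hγd t ht]; exact h2)
      set v : ℝ → (Fin m → ℂ) := fun t i => iteratedDeriv (i : ℕ) u (γ t) with hvdef
      set v' : ℝ → (Fin m → ℂ) := fun t i => e * iteratedDeriv ((i : ℕ) + 1) u (γ t)
        with hv'def
      have hIccpos : ∀ t ∈ Icc r0 r1, 0 ≤ t ∧ t < ρ := fun t ht =>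
        ⟨le_trans hr00.le ht.1, lt_of_le_of_lt ht.2 hr1ρ⟩
      have hv : ∀ t ∈ Icc r0 r1, HasDerivAt v (v' t) t := by
        intro t ht
        refine hasDerivAt_pi.2 fun i => ?_
        exact radial_hasDerivAt c ρ u hu e (i : ℕ) t (hγball t (hIccpos t ht).1 (hIccpos t ht).2)
      set B : ℝ → ℝ := fun t => D * (ρ - t) ^ (-M') with hBdef
      set B' : ℝ → ℝ := fun t => D * (M' * (ρ - t) ^ (-M' - 1)) with hB'def
      have hB'at : ∀ t : ℝ, t < ρ → HasDerivAt B (B' t) t := by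
        intro t ht
        have h1 : HasDerivAt (fun s : ℝ => ρ - s) (-1) t := by
          simpa using (hasDerivAt_id t).const_sub ρ
        have h2 := h1.rpow_const (p := -M') (Or.inl (by linarith : ρ - t ≠ 0))
        have h3 := h2.const_mul D
        refine h3.congr_deriv ?_
        show _ = D * (M' * (ρ - t) ^ (-M' - 1))
        ring
      have hρr0 : ρ - r0 = ε := by rw [hr0]; ring
      have hBr0 : ‖v r0‖ ≤ B r0 := by
        have h1 : ‖v r0‖ ≤ V0 := by
          rw [pi_norm_le_iff_of_nonneg (by linarith : (0:ℝ) ≤ V0)]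
          intro i
          have hγr0 : γ r0 ∈ Metric.closedBall c r0 := by
            rw [Metric.mem_closedBall, hγd r0 hr00.le]
          have h2 := norm_le_pi_norm (fun i : Fin (m + 1) => iteratedDeriv (i : ℕ) u (γ r0))
            ⟨(i : ℕ), lt_trans i.isLt (Nat.lt_succ_self m)⟩
          exact le_trans h2 (hV0 (γ r0) hγr0)
        have h2 : V0 ≤ B r0 := by
          have hDge : V0 * ε ^ M' ≤ D := by
            rw [hD]; exact le_trans (le_max_left _ _) (le_max_left _ _)
          have h3 : (0:ℝ) < ε ^ (-M') := Real.rpow_pos_of_pos hε0 _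
          have h4 : ε ^ M' * ε ^ (-M') = 1 := by
            rw [← Real.rpow_add hε0]; simp
          calc V0 = V0 * (ε ^ M' * ε ^ (-M')) := by rw [h4, mul_one]
            _ = V0 * ε ^ M' * ε ^ (-M') := by ring
            _ ≤ D * ε ^ (-M') := mul_le_mul_of_nonneg_right hDge h3.le
            _ = B r0 := by simp only [hBdef]; rw [hρr0]
        exact le_trans h1 h2
      have hbound : ∀ t ∈ Ico r0 r1, ‖v t‖ = B t → ‖v' t‖ < B' t := by
        intro t ht hEq
        have ht0 : 0 ≤ t := le_trans hr00.le ht.1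
        have htρ : t < ρ := lt_trans ht.2 hr1ρ
        have hyt0 : 0 < ρ - t := by linarith
        have hytρ : ρ - t ≤ ρ := by linarith
        have hw : γ t ∈ Metric.ball c ρ := hγball t ht0 htρ
        have hwd : dist (γ t) c = t := hγd t ht0
        have hBt0 : 0 < B t := by
          simp only [hBdef]
          exact mul_pos hD0 (Real.rpow_pos_of_pos hyt0 _)
        have hK0 : (0:ℝ) < K := by linarith
        have hg0 : (0:ℝ) ≤ C / δ0 * (ρ - t) ^ (-M) := by positivity
        have hstep1 : ‖v' t‖ ≤ K * B t + C / δ0 * (ρ - t) ^ (-M) := by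
          rw [pi_norm_le_iff_of_nonneg
            (add_nonneg (mul_pos hK0 hBt0).le hg0)]
          intro i
          have hnormi : ‖v' t i‖ = ‖iteratedDeriv ((i : ℕ) + 1) u (γ t)‖ := by
            show ‖e * iteratedDeriv ((i : ℕ) + 1) u (γ t)‖ = _
            rw [norm_mul, he, one_mul]
          rw [hnormi]
          by_cases hilt : (i : ℕ) + 1 < m
          · have h2 : ‖iteratedDeriv ((i : ℕ) + 1) u (γ t)‖
                = ‖v t ⟨(i : ℕ) + 1, hilt⟩‖ := rfl
            rw [h2]
            calc ‖v t ⟨(i : ℕ) + 1, hilt⟩‖ ≤ ‖v t‖ := norm_le_pi_norm _ _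
              _ = B t := hEq
              _ ≤ K * B t := le_mul_of_one_le_left hBt0.le hK1
              _ ≤ K * B t + C / δ0 * (ρ - t) ^ (-M) := le_add_of_nonneg_right hg0
          · have him : (i : ℕ) + 1 = m := by
              have := i.isLt
              omega
            rw [him]
            have hsum : Pop m a u (γ t)
                = (∑ j ∈ Finset.range m, a j (γ t) * iteratedDeriv j u (γ t))
                  + a m (γ t) * iteratedDeriv m u (γ t) := Finset.sum_range_succ _ m
            have hidm : a m (γ t) * iteratedDeriv m u (γ t)
                = Pop m a u (γ t)
                  - ∑ j ∈ Finset.range m, a j (γ t) * iteratedDeriv j u (γ t) := by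
              rw [hsum]; ring
            have hsumb : ‖∑ j ∈ Finset.range m, a j (γ t) * iteratedDeriv j u (γ t)‖
                ≤ BS * B t := by
              calc ‖∑ j ∈ Finset.range m, a j (γ t) * iteratedDeriv j u (γ t)‖
                  ≤ ∑ j ∈ Finset.range m, ‖a j (γ t) * iteratedDeriv j u (γ t)‖ :=
                    norm_sum_le _ _
                _ ≤ ∑ j ∈ Finset.range m, ‖a j (γ t)‖ * B t := by
                    refine Finset.sum_le_sum fun j hj => ?_
                    rw [norm_mul]
                    refine mul_le_mul_of_nonneg_left ?_ (norm_nonneg _)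
                    have h2 : ‖iteratedDeriv j u (γ t)‖
                        = ‖v t ⟨j, Finset.mem_range.1 hj⟩‖ := rfl
                    rw [h2, ← hEq]
                    exact norm_le_pi_norm _ _
                _ = (∑ j ∈ Finset.range m, ‖a j (γ t)‖) * B t := by
                    rw [Finset.sum_mul]
                _ ≤ BS * B t := by
                    refine mul_le_mul_of_nonneg_right
                      (hBS (γ t) (Metric.ball_subset_closedBall hw)) hBt0.le
            have hδvt : δ0 * ‖iteratedDeriv m u (γ t)‖
                ≤ C * (ρ - t) ^ (-M) + BS * B t := by
              have hPbt : ‖Pop m a u (γ t)‖ ≤ C * (ρ - t) ^ (-M) := by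
                have := hPb' (γ t) hw
                rwa [hwd] at this
              calc δ0 * ‖iteratedDeriv m u (γ t)‖
                  ≤ ‖a m (γ t)‖ * ‖iteratedDeriv m u (γ t)‖ :=
                    mul_le_mul_of_nonneg_right
                      (hδ0 _ (by rw [hwd]; exact ht.1) (by rw [hwd]; exact htρ.le))
                      (norm_nonneg _)
                _ = ‖a m (γ t) * iteratedDeriv m u (γ t)‖ := (norm_mul _ _).symm
                _ = ‖Pop m a u (γ t)
                      - ∑ j ∈ Finset.range m, a j (γ t) * iteratedDeriv j u (γ t)‖ := by
                    rw [hidm]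
                _ ≤ ‖Pop m a u (γ t)‖
                      + ‖∑ j ∈ Finset.range m, a j (γ t) * iteratedDeriv j u (γ t)‖ :=
                    norm_sub_le _ _
                _ ≤ C * (ρ - t) ^ (-M) + BS * B t := add_le_add hPbt hsumb
            have h7 : ‖iteratedDeriv m u (γ t)‖
                ≤ (C * (ρ - t) ^ (-M) + BS * B t) / δ0 := by
              rw [le_div_iff₀ hδ00, mul_comm]
              exact hδvt
            have h8 : BS / δ0 ≤ K := by
              rw [hK]; linarith
            calc ‖iteratedDeriv m u (γ t)‖
                ≤ (C * (ρ - t) ^ (-M) + BS * B t) / δ0 := h7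
              _ = C / δ0 * (ρ - t) ^ (-M) + BS / δ0 * B t := by ring
              _ ≤ C / δ0 * (ρ - t) ^ (-M) + K * B t :=
                  add_le_add le_rfl (mul_le_mul_of_nonneg_right h8 hBt0.le)
              _ = K * B t + C / δ0 * (ρ - t) ^ (-M) := by ring
        have hstep2 : K * B t + C / δ0 * (ρ - t) ^ (-M) < B' t := by
          have hKy : K * (ρ - t) ≤ M' / 4 := by
            have h1 : K * (ρ - t) ≤ K * ρ := mul_le_mul_of_nonneg_left hytρ hK0.le
            linarith only [h1, hM'K]
          have hinv : (ρ - t)⁻¹ = (ρ - t) ^ (-1 : ℝ) := by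
            rw [Real.rpow_neg hyt0.le, Real.rpow_one]
          have hexp : (-M' - 1 : ℝ) = -M' + (-1) := by ring
          have hsplit : (ρ - t) ^ (-M' - 1) = (ρ - t) ^ (-M') * (ρ - t)⁻¹ := by
            rw [hexp, Real.rpow_add hyt0, ← hinv]
          have ht1 : K * B t ≤ 1 / 4 * B' t := by
            simp only [hBdef, hB'def]
            rw [hsplit]
            have hwit : K * (D * (ρ - t) ^ (-M'))
                = (K * (ρ - t)) * (D * ((ρ - t) ^ (-M') * (ρ - t)⁻¹)) := by
              field_simp
            rw [hwit]
            calc (K * (ρ - t)) * (D * ((ρ - t) ^ (-M') * (ρ - t)⁻¹))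
                ≤ (M' / 4) * (D * ((ρ - t) ^ (-M') * (ρ - t)⁻¹)) := by
                  refine mul_le_mul_of_nonneg_right hKy ?_
                  have := Real.rpow_pos_of_pos hyt0 (-M')
                  positivity
              _ = 1 / 4 * (D * (M' * ((ρ - t) ^ (-M') * (ρ - t)⁻¹))) := by ring
          have hexp2 : (-M : ℝ) = (M' + 1 - M) + (-M' - 1) := by ring
          have hsplit2 : (ρ - t) ^ (-M) = (ρ - t) ^ (M' + 1 - M) * (ρ - t) ^ (-M' - 1) := by
            rw [hexp2, Real.rpow_add hyt0]
          have hD4 : C / δ0 * ρ ^ (M' + 1 - M) ≤ M' / 4 * D := by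
            have h1 : 4 * C * ρ ^ (M' + 1 - M) / (δ0 * M') ≤ D := by
              rw [hD]; exact le_max_right _ _
            rw [div_le_iff₀ (by positivity)] at h1
            rw [div_mul_eq_mul_div, div_le_iff₀ hδ00]
            linarith only [h1]
          have ht2 : C / δ0 * (ρ - t) ^ (-M) ≤ 1 / 4 * B' t := by
            simp only [hB'def]
            rw [hsplit2]
            have h5 : (ρ - t) ^ (M' + 1 - M) ≤ ρ ^ (M' + 1 - M) :=
              Real.rpow_le_rpow hyt0.le hytρ (by linarith)
            calc C / δ0 * ((ρ - t) ^ (M' + 1 - M) * (ρ - t) ^ (-M' - 1))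
                = (C / δ0 * (ρ - t) ^ (M' + 1 - M)) * (ρ - t) ^ (-M' - 1) := by ring
              _ ≤ (C / δ0 * ρ ^ (M' + 1 - M)) * (ρ - t) ^ (-M' - 1) := by
                  refine mul_le_mul_of_nonneg_right ?_ (Real.rpow_pos_of_pos hyt0 _).le
                  exact mul_le_mul_of_nonneg_left h5 (by positivity)
              _ ≤ (M' / 4 * D) * (ρ - t) ^ (-M' - 1) :=
                  mul_le_mul_of_nonneg_right hD4 (Real.rpow_pos_of_pos hyt0 _).le
              _ = 1 / 4 * (D * (M' * (ρ - t) ^ (-M' - 1))) := by ring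
          have hB'pos : 0 < B' t := by
            simp only [hB'def]
            exact mul_pos hD0 (mul_pos hM'0 (Real.rpow_pos_of_pos hyt0 _))
          calc K * B t + C / δ0 * (ρ - t) ^ (-M) ≤ 1 / 4 * B' t + 1 / 4 * B' t :=
              add_le_add ht1 ht2
            _ = 1 / 2 * B' t := by ring
            _ < B' t := by linarith
        exact lt_of_le_of_lt hstep1 hstep2
      have hcont_v : ContinuousOn v (Icc r0 r1) := fun t ht =>
        (hv t ht).continuousAt.continuousWithinAt
      have hcont_B : ContinuousOn B (Icc r0 r1) := fun t ht =>
        ((hB'at t (hIccpos t ht).2).continuousAt).continuousWithinAt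
      have hcomp := image_norm_le_of_norm_deriv_right_lt_deriv_boundary' hcont_v
        (fun t ht => (hv t (Ico_subset_Icc_self ht)).hasDerivWithinAt) hBr0 hcont_B
        (fun t ht => (hB'at t (lt_trans ht.2 hr1ρ)).hasDerivWithinAt) hbound
      have hfin : ‖v r1‖ ≤ B r1 := hcomp (right_mem_Icc.2 hrz)
      have h0 : ‖u z‖ = ‖v r1 ⟨0, hm0⟩‖ := by
        show _ = ‖iteratedDeriv ((⟨0, hm0⟩ : Fin m) : ℕ) u (γ r1)‖
        have : γ r1 = z := hγz
        rw [this]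
        simp [iteratedDeriv_zero]
      calc ‖u z‖ = ‖v r1 ⟨0, hm0⟩‖ := h0
        _ ≤ ‖v r1‖ := norm_le_pi_norm _ _
        _ ≤ B r1 := hfin
        _ = D * (ρ - r1) ^ (-M') := by simp only [hBdef]
  -- assemble
  refine ⟨max D (V0 * ρ ^ M'), M', lt_max_of_lt_left hD0, hM'0, ?_⟩
  intro z hz
  rw [hinf z (Metric.ball_subset_closedBall hz)]
  have hdz : dist z c < ρ := Metric.mem_ball.1 hz
  have hy0 : 0 < ρ - dist z c := by linarith
  have hyρ : ρ - dist z c ≤ ρ := by have := dist_nonneg (x := z) (y := c); linarith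
  by_cases hcase : r0 ≤ dist z c
  · calc ‖u z‖ ≤ D * (ρ - dist z c) ^ (-M') := key z hz hcase
      _ ≤ max D (V0 * ρ ^ M') * (ρ - dist z c) ^ (-M') := by
          apply mul_le_mul_of_nonneg_right (le_max_left _ _)
          exact (Real.rpow_pos_of_pos hy0 _).le
  · push_neg at hcase
    have hzin : z ∈ Metric.closedBall c r0 := Metric.mem_closedBall.2 hcase.le
    have h1 : ‖u z‖ ≤ V0 := by
      have h2 := hV0 z hzin
      have h3 := norm_le_pi_norm (fun i : Fin (m + 1) => iteratedDeriv (i : ℕ) u z)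
        ⟨0, Nat.succ_pos m⟩
      simp only [iteratedDeriv_zero] at h3
      calc ‖u z‖ = ‖u z‖ := rfl
        _ ≤ _ := h3
        _ ≤ V0 := h2
    have h4 : (1:ℝ) ≤ ρ ^ M' * (ρ - dist z c) ^ (-M') := by
      have h5 : (ρ - dist z c) ^ (-M') ≥ ρ ^ (-M') := by
        rw [Real.rpow_neg hy0.le, Real.rpow_neg hρ.le]
        apply inv_anti₀ (Real.rpow_pos_of_pos hy0 _)
        exact Real.rpow_le_rpow hy0.le hyρ hM'0.le
      calc (1:ℝ) = ρ ^ M' * ρ ^ (-M') := by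
            rw [← Real.rpow_add hρ]; simp
        _ ≤ ρ ^ M' * (ρ - dist z c) ^ (-M') := by
            apply mul_le_mul_of_nonneg_left h5 (Real.rpow_pos_of_pos hρ _).le
    calc ‖u z‖ ≤ V0 := h1
      _ = V0 * 1 := (mul_one _).symm
      _ ≤ V0 * (ρ ^ M' * (ρ - dist z c) ^ (-M')) := by
          apply mul_le_mul_of_nonneg_left h4 (by linarith)
      _ = V0 * ρ ^ M' * (ρ - dist z c) ^ (-M') := by ring
      _ ≤ max D (V0 * ρ ^ M') * (ρ - dist z c) ^ (-M') := by
          apply mul_le_mul_of_nonneg_right (le_max_right _ _)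
          exact (Real.rpow_pos_of_pos hy0 _).le
end
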